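/- Let d > 1 be a real number. The function ν ↦ h₂(ν,d) is strictly decreasing on (0,∞): for all real 0 < ν₁ < ν₂, h₂(ν₂,d) < h₂(ν₁,d). -/

import Mathlib

/-- `h₁(ν,d) = (ν+1)² + 4ν²(d−1)`. -/
noncomputable def h1 (ν d : ℝ) : ℝ := (ν + 1) ^ 2 + 4 * ν ^ 2 * (d - 1)

/-- `h₂(ν,d) = ((ν+1)·√(h₁(ν,d)) − (ν+1)²)/(4ν²(d−1)) − 1/2`. -/
noncomputable def h2 (ν d : ℝ) : ℝ :=
  ((ν + 1) * Real.sqrt (h1 ν d) - (ν + 1) ^ 2) / (4 * ν ^ 2 * (d - 1)) - 1 / 2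

/-- `g₁(ν,α,d) = (ν + 1 + (d−1)·α·ν)·exp(−(ν² + (d−1)·α²)/2)`. -/
noncomputable def g1 (ν α d : ℝ) : ℝ :=
  (ν + 1 + (d - 1) * α * ν) * Real.exp (-(ν ^ 2 + (d - 1) * α ^ 2) / 2)

/-- `g₂(ν,d) = ((ν + 1 + √(h₁(ν,d)))/2)·exp(−ν²/2 + h₂(ν,d))`. -/
noncomputable def g2 (ν d : ℝ) : ℝ :=
  ((ν + 1 + Real.sqrt (h1 ν d)) / 2) * Real.exp (-ν ^ 2 / 2 + h2 ν d)

lemma h2_eq (d ν : ℝ) (hd : 1 < d) (hν : 0 < ν) :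
    h2 ν d = 1 / (1 + Real.sqrt (1 + 4 * (d - 1) * ν ^ 2 / (ν + 1) ^ 2)) - 1 / 2 := by
  have hνp : (0:ℝ) < ν + 1 := by linarith
  have hν2 : (0:ℝ) < (ν + 1) ^ 2 := by positivity
  have hd1 : (0:ℝ) < d - 1 := by linarith
  set t : ℝ := 1 + 4 * (d - 1) * ν ^ 2 / (ν + 1) ^ 2 with ht
  clear_value t
  have ht1 : 1 < t := by
    have : 0 < 4 * (d - 1) * ν ^ 2 / (ν + 1) ^ 2 :=
      div_pos (by positivity) hν2
    linarith
  have hh1 : h1 ν d = (ν + 1) ^ 2 * t := by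
    rw [h1, ht]; field_simp
  set s : ℝ := Real.sqrt t with hs
  have hs2 : s ^ 2 = t := Real.sq_sqrt (by linarith)
  have hs1 : 1 < s := by
    rw [hs]
    have := Real.lt_sqrt (x := 1) (y := t) (by norm_num)
    rw [this]; nlinarith
  have hsqrt : Real.sqrt (h1 ν d) = (ν + 1) * s := by
    rw [hh1, Real.sqrt_mul (sq_nonneg _), Real.sqrt_sq hνp.le]
  rw [h2, hsqrt]
  have hden : 4 * ν ^ 2 * (d - 1) = (ν + 1) ^ 2 * (s ^ 2 - 1) := by
    rw [hs2, ht]; field_simp; ring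
  rw [hden]
  have h1s : (0:ℝ) < 1 + s := by linarith
  have hne : (ν + 1) ^ 2 * (s ^ 2 - 1) ≠ 0 := by
    have : (0:ℝ) < s ^ 2 - 1 := by nlinarith
    positivity
  have hs21 : s ^ 2 - 1 ≠ 0 := ne_of_gt (by nlinarith)
  field_simp
  ring

/-- For real `d > 1`, the function `ν ↦ h₂(ν,d)` is strictly decreasing on `(0,∞)`. -/
theorem stmt_10 (d : ℝ) (hd : 1 < d) (ν₁ ν₂ : ℝ) (h₀ : 0 < ν₁) (h₁₂ : ν₁ < ν₂) :
    h2 ν₂ d < h2 ν₁ d := by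
  have h₀' : 0 < ν₂ := lt_trans h₀ h₁₂
  rw [h2_eq d ν₁ hd h₀, h2_eq d ν₂ hd h₀']
  have hglt : 4 * (d - 1) * ν₁ ^ 2 / (ν₁ + 1) ^ 2 < 4 * (d - 1) * ν₂ ^ 2 / (ν₂ + 1) ^ 2 := by
    have hd1 : (0:ℝ) < d - 1 := by linarith
    rw [div_lt_div_iff₀ (by positivity) (by positivity)]
    have hkey : ν₁ ^ 2 * (ν₂ + 1) ^ 2 < ν₂ ^ 2 * (ν₁ + 1) ^ 2 := by
      nlinarith [mul_pos h₀ h₀', mul_pos (mul_pos h₀ h₀') h₀']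
    nlinarith [mul_lt_mul_of_pos_left hkey (show (0:ℝ) < 4 * (d - 1) by linarith)]
  have hslt : Real.sqrt (1 + 4 * (d - 1) * ν₁ ^ 2 / (ν₁ + 1) ^ 2) <
      Real.sqrt (1 + 4 * (d - 1) * ν₂ ^ 2 / (ν₂ + 1) ^ 2) := by
    have hd1 : (0:ℝ) < d - 1 := by linarith
    have h1 : (0:ℝ) ≤ 4 * (d - 1) * ν₁ ^ 2 / (ν₁ + 1) ^ 2 :=
      le_of_lt (div_pos (by positivity) (by positivity))
    apply Real.sqrt_lt_sqrt (by linarith); linarith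
  have hp1 : (0:ℝ) < 1 + Real.sqrt (1 + 4 * (d - 1) * ν₁ ^ 2 / (ν₁ + 1) ^ 2) := by positivity
  have : 1 / (1 + Real.sqrt (1 + 4 * (d - 1) * ν₂ ^ 2 / (ν₂ + 1) ^ 2)) <
      1 / (1 + Real.sqrt (1 + 4 * (d - 1) * ν₁ ^ 2 / (ν₁ + 1) ^ 2)) := by
    apply one_div_lt_one_div_of_lt hp1; linarith
  linarith
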